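/- Let $s\geq 1$, $\omega_0>1$, $b_s = T_s''(\omega_0)/T_s'(\omega_0)^2$, $\omega_2 = T_s'(\omega_0)/T_s''(\omega_0)$, $a_s = 1 - b_s T_s(\omega_0)$. Define $R_2(p,q) = a_s + b_s T_s(\omega_0+\omega_2 p) + \big(\tfrac{\omega_2}{2} + (1-\tfrac{\omega_2}{2})\tfrac{U_{s-1}(\omega_0+\omega_2 p)}{U_{s-1}(\omega_0)}\big)(1+\tfrac{\omega_2}{2}p)(iq - \tfrac{q^2}{2})$, viewed as a polynomial in the real variables $p, q$ with complex coefficients. Then $R_2$ agrees with $1 + (p+iq) + \tfrac12(p+iq)^2$ up to total degree 2 in $(p,q)$: $R_2(0,0)=1$, $\partial_p R_2(0,0)=1$, $\partial_q R_2(0,0)=i$, $\partial_p^2 R_2(0,0)=1$, $\partial_p\partial_q R_2(0,0)=i$, and $\partial_q^2 R_2(0,0)=-1$. -/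

import Mathlib

open Polynomial Polynomial.Chebyshev Complex

/-- Second order conditions for the ARKC stability polynomial: `R₂` agrees with
`1 + (p+iq) + (p+iq)²/2` up to total degree 2 in `(p,q)`. -/
theorem arkc_second_order_conditions (s : ℕ) (hs : 1 ≤ s) (ω0 : ℝ) (hω0 : 1 < ω0)
    (hT' : (derivative (T ℝ (s : ℤ))).eval ω0 ≠ 0)
    (hT'' : (derivative (derivative (T ℝ (s : ℤ)))).eval ω0 ≠ 0)
    (hU : (U ℝ ((s : ℤ) - 1)).eval ω0 ≠ 0)
    (bs ω2 as : ℝ)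
    (hbs : bs = (derivative (derivative (T ℝ (s : ℤ)))).eval ω0 /
      ((derivative (T ℝ (s : ℤ))).eval ω0) ^ 2)
    (hω2 : ω2 = (derivative (T ℝ (s : ℤ))).eval ω0 /
      (derivative (derivative (T ℝ (s : ℤ)))).eval ω0)
    (has : as = 1 - bs * (T ℝ (s : ℤ)).eval ω0)
    (R : ℝ → ℝ → ℂ)
    (hR : ∀ p q, R p q = (as : ℂ) + (bs : ℂ) * ((T ℝ (s : ℤ)).eval (ω0 + ω2 * p) : ℝ) +
      ((ω2 : ℂ) / 2 + (1 - (ω2 : ℂ) / 2) *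
        (((U ℝ ((s : ℤ) - 1)).eval (ω0 + ω2 * p) / (U ℝ ((s : ℤ) - 1)).eval ω0 : ℝ) : ℂ)) *
      (1 + (ω2 : ℂ) / 2 * (p : ℂ)) * (Complex.I * (q : ℂ) - (q : ℂ) ^ 2 / 2)) :
    R 0 0 = 1 ∧
    deriv (fun p : ℝ => R p 0) 0 = 1 ∧
    deriv (fun q : ℝ => R 0 q) 0 = Complex.I ∧
    deriv (deriv (fun p : ℝ => R p 0)) 0 = 1 ∧
    deriv (fun p : ℝ => deriv (fun q : ℝ => R p q) 0) 0 = Complex.I ∧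
    deriv (deriv (fun q : ℝ => R 0 q)) 0 = -1 := by
  have hs0 : (s : ℝ) ≠ 0 := Nat.cast_ne_zero.mpr (by omega)
  have hs0 : (s : ℝ) ≠ 0 := Nat.cast_ne_zero.mpr (by omega)
  -- Chebyshev derivative relations
  have hTd : derivative (T ℝ (s : ℤ)) = (((s : ℤ) : ℝ[X])) * U ℝ ((s : ℤ) - 1) :=
    T_derivative_eq_U (R := ℝ) (s : ℤ)
  have hTdd : derivative (derivative (T ℝ (s : ℤ))) =
      (((s : ℤ) : ℝ[X])) * derivative (U ℝ ((s : ℤ) - 1)) := by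
    rw [hTd, derivative_mul]; simp
  have e1 : (derivative (T ℝ (s : ℤ))).eval ω0 = (s : ℝ) * (U ℝ ((s : ℤ) - 1)).eval ω0 := by
    rw [hTd]; push_cast; simp
  have e2 : (derivative (derivative (T ℝ (s : ℤ)))).eval ω0 =
      (s : ℝ) * (derivative (U ℝ ((s : ℤ) - 1))).eval ω0 := by
    rw [hTdd]; push_cast; simp
  -- basic derivative machinery
  have hlin : ∀ p : ℝ, HasDerivAt (fun x : ℝ => ω0 + ω2 * x) ω2 p := by
    intro p; simpa using ((hasDerivAt_id p).const_mul ω2).const_add ω0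
  have hTpoly : ∀ p : ℝ, HasDerivAt (fun x : ℝ => (T ℝ (s : ℤ)).eval (ω0 + ω2 * x))
      ((derivative (T ℝ (s : ℤ))).eval (ω0 + ω2 * p) * ω2) p := fun p =>
    by have := ((T ℝ (s : ℤ)).hasDerivAt (ω0 + ω2 * p)).comp p (hlin p); exact this
  have hTpoly' : ∀ p : ℝ, HasDerivAt
      (fun x : ℝ => (derivative (T ℝ (s : ℤ))).eval (ω0 + ω2 * x))
      ((derivative (derivative (T ℝ (s : ℤ)))).eval (ω0 + ω2 * p) * ω2) p := fun p =>
    by have := ((derivative (T ℝ (s : ℤ))).hasDerivAt (ω0 + ω2 * p)).comp p (hlin p); exact this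
  have hUpoly : ∀ p : ℝ, HasDerivAt (fun x : ℝ => (U ℝ ((s : ℤ) - 1)).eval (ω0 + ω2 * x))
      ((derivative (U ℝ ((s : ℤ) - 1))).eval (ω0 + ω2 * p) * ω2) p := fun p =>
    by have := ((U ℝ ((s : ℤ) - 1)).hasDerivAt (ω0 + ω2 * p)).comp p (hlin p); exact this
  -- the p ↦ R p 0 direction
  have hRp0 : (fun p : ℝ => R p 0) =
      fun p : ℝ => ((as + bs * (T ℝ (s : ℤ)).eval (ω0 + ω2 * p) : ℝ) : ℂ) := by
    funext p; rw [hR]; push_cast; ring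
  have hfA : ∀ p : ℝ, HasDerivAt
      (fun p : ℝ => ((as + bs * (T ℝ (s : ℤ)).eval (ω0 + ω2 * p) : ℝ) : ℂ))
      ((bs * ((derivative (T ℝ (s : ℤ))).eval (ω0 + ω2 * p) * ω2) : ℝ) : ℂ) p := fun p =>
    (((hTpoly p).const_mul bs).const_add as).ofReal_comp
  have dA : deriv (fun p : ℝ => R p 0) =
      fun p : ℝ => ((bs * ((derivative (T ℝ (s : ℤ))).eval (ω0 + ω2 * p) * ω2) : ℝ) : ℂ) := by
    rw [hRp0]; funext p; exact (hfA p).deriv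
  have c1 : R 0 0 = 1 := by
    rw [hR]; simp [has]
  have c2 : deriv (fun p : ℝ => R p 0) 0 = 1 := by
    rw [hRp0, (hfA 0).deriv]
    have : bs * ((derivative (T ℝ (s : ℤ))).eval (ω0 + ω2 * 0) * ω2) = 1 := by
      rw [mul_zero, add_zero, hbs, hω2]; field_simp
    exact_mod_cast this
  have c4 : deriv (deriv (fun p : ℝ => R p 0)) 0 = 1 := by
    rw [dA]
    have h : HasDerivAt
        (fun p : ℝ => ((bs * ((derivative (T ℝ (s : ℤ))).eval (ω0 + ω2 * p) * ω2) : ℝ) : ℂ))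
        ((bs * ((derivative (derivative (T ℝ (s : ℤ)))).eval (ω0 + ω2 * 0) * ω2 * ω2) : ℝ) : ℂ)
        0 := (((hTpoly' 0).mul_const ω2).const_mul bs).ofReal_comp
    rw [h.deriv]
    have : bs * ((derivative (derivative (T ℝ (s : ℤ)))).eval (ω0 + ω2 * 0) * ω2 * ω2) = 1 := by
      rw [mul_zero, add_zero, hbs, hω2]; field_simp
    exact_mod_cast this
  -- the q ↦ R 0 q direction
  have hR0q : (fun q : ℝ => R 0 q) =
      fun q : ℝ => (1 : ℂ) + (Complex.I * q - (q : ℂ) ^ 2 / 2) := by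
    funext q
    rw [hR, has]
    simp only [mul_zero, add_zero, div_self hU]
    push_cast; ring
  have hq1 : ∀ q : ℝ, HasDerivAt (fun q : ℝ => (q : ℂ)) 1 q := by
    intro q
    exact Complex.ofRealCLM.hasDerivAt (x := q)
  have hinner : ∀ q : ℝ, HasDerivAt (fun q : ℝ => Complex.I * q - (q : ℂ) ^ 2 / 2)
      (Complex.I - q) q := by
    intro q
    have h2 := (hq1 q).const_mul Complex.I
    have h3 := ((hq1 q).mul (hq1 q)).div_const 2
    have h4 := h2.sub h3
    have heq : (fun q : ℝ => Complex.I * q - (q : ℂ) ^ 2 / 2) =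
        fun q : ℝ => Complex.I * (q : ℂ) - (q : ℂ) * (q : ℂ) / 2 := by
      funext x; ring
    rw [heq]
    exact h4.congr_deriv (by ring)
  have hqD : ∀ q : ℝ, HasDerivAt (fun q : ℝ => (1 : ℂ) + (Complex.I * q - (q : ℂ) ^ 2 / 2))
      (Complex.I - q) q := fun q => (hinner q).const_add 1
  have dB : deriv (fun q : ℝ => R 0 q) = fun q : ℝ => Complex.I - (q : ℂ) := by
    rw [hR0q]; funext q; exact (hqD q).deriv
  have c3 : deriv (fun q : ℝ => R 0 q) 0 = Complex.I := by rw [dB]; simp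
  have c6 : deriv (deriv (fun q : ℝ => R 0 q)) 0 = -1 := by
    rw [dB]
    have h : HasDerivAt (fun q : ℝ => Complex.I - (q : ℂ)) (-1) 0 := by
      simpa using (hq1 0).const_sub Complex.I
    rw [h.deriv]
  -- the mixed direction
  have hmix : (fun p : ℝ => deriv (fun q : ℝ => R p q) 0) = fun p : ℝ =>
      ((ω2 : ℂ) / 2 + (1 - (ω2 : ℂ) / 2) *
        (((U ℝ ((s : ℤ) - 1)).eval (ω0 + ω2 * p) / (U ℝ ((s : ℤ) - 1)).eval ω0 : ℝ) : ℂ)) *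
      (1 + (ω2 : ℂ) / 2 * (p : ℂ)) * Complex.I := by
    funext p
    have hfq : (fun q : ℝ => R p q) = fun q : ℝ =>
        ((as : ℂ) + (bs : ℂ) * ((T ℝ (s : ℤ)).eval (ω0 + ω2 * p) : ℝ)) +
        (((ω2 : ℂ) / 2 + (1 - (ω2 : ℂ) / 2) *
          (((U ℝ ((s : ℤ) - 1)).eval (ω0 + ω2 * p) / (U ℝ ((s : ℤ) - 1)).eval ω0 : ℝ) : ℂ)) *
        (1 + (ω2 : ℂ) / 2 * (p : ℂ))) * (Complex.I * q - (q : ℂ) ^ 2 / 2) := by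
      funext q; rw [hR]; try ring
    rw [hfq]
    have h := (((hinner 0).const_mul
      (((ω2 : ℂ) / 2 + (1 - (ω2 : ℂ) / 2) *
        (((U ℝ ((s : ℤ) - 1)).eval (ω0 + ω2 * p) / (U ℝ ((s : ℤ) - 1)).eval ω0 : ℝ) : ℂ)) *
      (1 + (ω2 : ℂ) / 2 * (p : ℂ)))).const_add
      ((as : ℂ) + (bs : ℂ) * ((T ℝ (s : ℤ)).eval (ω0 + ω2 * p) : ℝ)))
    rw [h.deriv]
    push_cast
    try ring
  have c5 : deriv (fun p : ℝ => deriv (fun q : ℝ => R p q) 0) 0 = Complex.I := by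
    rw [hmix]
    have hg : HasDerivAt (fun p : ℝ =>
        ((U ℝ ((s : ℤ) - 1)).eval (ω0 + ω2 * p) / (U ℝ ((s : ℤ) - 1)).eval ω0 : ℝ))
        ((derivative (U ℝ ((s : ℤ) - 1))).eval (ω0 + ω2 * 0) * ω2 /
          (U ℝ ((s : ℤ) - 1)).eval ω0) 0 := (hUpoly 0).div_const _
    have hF1 : HasDerivAt (fun p : ℝ => (ω2 : ℂ) / 2 + (1 - (ω2 : ℂ) / 2) *
        (((U ℝ ((s : ℤ) - 1)).eval (ω0 + ω2 * p) / (U ℝ ((s : ℤ) - 1)).eval ω0 : ℝ) : ℂ))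
        ((1 - (ω2 : ℂ) / 2) * ((derivative (U ℝ ((s : ℤ) - 1))).eval (ω0 + ω2 * 0) * ω2 /
          (U ℝ ((s : ℤ) - 1)).eval ω0 : ℝ)) 0 :=
      (hg.ofReal_comp.const_mul _).const_add _
    have hF2 : HasDerivAt (fun p : ℝ => (1 : ℂ) + (ω2 : ℂ) / 2 * (p : ℂ)) ((ω2 : ℂ) / 2) 0 := by
      simpa using ((hq1 0).const_mul ((ω2 : ℂ) / 2)).const_add 1
    have h := (hF1.mul hF2).mul_const Complex.I
    have key : (1 - ω2 / 2) * ((derivative (U ℝ ((s : ℤ) - 1))).eval (ω0 + ω2 * 0) * ω2 /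
          (U ℝ ((s : ℤ) - 1)).eval ω0) * (1 + ω2 / 2 * (0 : ℝ)) +
        (ω2 / 2 + (1 - ω2 / 2) *
          ((U ℝ ((s : ℤ) - 1)).eval (ω0 + ω2 * 0) / (U ℝ ((s : ℤ) - 1)).eval ω0)) * (ω2 / 2)
        = 1 := by
      rw [mul_zero, add_zero]
      have hU' : (derivative (U ℝ ((s : ℤ) - 1))).eval ω0 =
          (derivative (derivative (T ℝ (s : ℤ)))).eval ω0 / s := by
        rw [e2]; field_simp
      have hUe : (U ℝ ((s : ℤ) - 1)).eval ω0 = (derivative (T ℝ (s : ℤ))).eval ω0 / s := by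
        rw [e1]; field_simp
      rw [hU', hUe, hω2]; field_simp; ring
    have hval : ((1 - (ω2 : ℂ) / 2) *
          ((derivative (U ℝ ((s : ℤ) - 1))).eval (ω0 + ω2 * 0) * ω2 /
            (U ℝ ((s : ℤ) - 1)).eval ω0 : ℝ) * ((1 : ℂ) + (ω2 : ℂ) / 2 * ((0 : ℝ) : ℂ)) +
        ((ω2 : ℂ) / 2 + (1 - (ω2 : ℂ) / 2) *
          (((U ℝ ((s : ℤ) - 1)).eval (ω0 + ω2 * 0) / (U ℝ ((s : ℤ) - 1)).eval ω0 : ℝ) : ℂ)) *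
          ((ω2 : ℂ) / 2)) * Complex.I = Complex.I := by
      have hb : ((1 - (ω2 : ℂ) / 2) *
          ((derivative (U ℝ ((s : ℤ) - 1))).eval (ω0 + ω2 * 0) * ω2 /
            (U ℝ ((s : ℤ) - 1)).eval ω0 : ℝ) * ((1 : ℂ) + (ω2 : ℂ) / 2 * ((0 : ℝ) : ℂ)) +
        ((ω2 : ℂ) / 2 + (1 - (ω2 : ℂ) / 2) *
          (((U ℝ ((s : ℤ) - 1)).eval (ω0 + ω2 * 0) / (U ℝ ((s : ℤ) - 1)).eval ω0 : ℝ) : ℂ)) *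
          ((ω2 : ℂ) / 2)) =
        (((1 - ω2 / 2) * ((derivative (U ℝ ((s : ℤ) - 1))).eval (ω0 + ω2 * 0) * ω2 /
          (U ℝ ((s : ℤ) - 1)).eval ω0) * (1 + ω2 / 2 * (0 : ℝ)) +
        (ω2 / 2 + (1 - ω2 / 2) *
          ((U ℝ ((s : ℤ) - 1)).eval (ω0 + ω2 * 0) / (U ℝ ((s : ℤ) - 1)).eval ω0)) * (ω2 / 2)
          : ℝ) : ℂ) := by push_cast; ring
      rw [hb, key]; simp
    exact h.deriv.trans hval
  exact ⟨c1, c2, c3, c4, c5, c6⟩
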